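/- There exist a real constant β > 0 and an integer D₀ such that for every integer D ≥ D₀, every positive integer N, every degree-D MAX-3-LIN-2 instance J, and every index i in Fin N, the probability that |F_i(v)| ≥ (1/2)·D^{3/4} is at most exp(−β·D^{1/4}). -/

import Mathlib

set_option maxHeartbeats 1000000


/-- A degree-`D` MAX-3-LIN-2 instance on `N` spins: `J` takes values in `{-1, 0, +1}`,
is symmetric under all permutations of its three arguments, vanishes whenever two
indices coincide, and every spin participates in exactly `D` distinct terms
(`∑_{j,k} J(i,j,k)² = 2·D` for every `i`). -/
def IsMax3Lin2 (N D : ℕ) (J : Fin N → Fin N → Fin N → ℝ) : Prop :=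
  (∀ i j k, J i j k = -1 ∨ J i j k = 0 ∨ J i j k = 1) ∧
  (∀ i j k, J i j k = J j i k) ∧
  (∀ i j k, J i j k = J i k j) ∧
  (∀ i j k, (i = j ∨ i = k ∨ j = k) → J i j k = 0) ∧
  (∀ i, ∑ j, ∑ k, (J i j k) ^ 2 = 2 * D)

/-- The random vector associated to a choice of signs: each coordinate is `+1/2` or `-1/2`. -/
noncomputable def signedVec {N : ℕ} (s : Fin N → Bool) : Fin N → ℝ :=
  fun i => if s i then 1 / 2 else -(1 / 2)

/-- Expectation over a random vector `v : Fin N → ℝ` whose coordinates are independent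
and uniform on `{-1/2, +1/2}`: average over all `2^N` sign patterns. -/
noncomputable def expect (N : ℕ) (f : (Fin N → ℝ) → ℝ) : ℝ :=
  (∑ s : Fin N → Bool, f (signedVec s)) / 2 ^ N

/-- The force `F_i(v) = (1/2)·∑_{j,k} J(i,j,k)·v_j·v_k`. -/
noncomputable def force {N : ℕ} (J : Fin N → Fin N → Fin N → ℝ)
    (v : Fin N → ℝ) (i : Fin N) : ℝ :=
  (1 / 2) * ∑ j, ∑ k, J i j k * v j * v k

section Aux
open Finset


lemma binom_aux (m : ℕ) : ∀ j, j ≤ m → Nat.choose (2*m) (2*j) ≤ Nat.choose m j * (2*m-1)^j := by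
  intro j
  induction j with
  | zero => simp
  | succ j ih =>
    intro hj
    obtain ⟨p, rfl⟩ : ∃ p, m = j + 1 + p := ⟨m - (j+1), by omega⟩
    set m := j + 1 + p with hm
    have ihj := ih (by omega)
    have h1 : Nat.choose (2*m) (2*j+1) * (2*j+1) = Nat.choose (2*m) (2*j) * (2*m - 2*j) :=
      Nat.choose_succ_right_eq _ _
    have h2 : Nat.choose (2*m) (2*j+2) * (2*j+2) = Nat.choose (2*m) (2*j+1) * (2*m - (2*j+1)) :=
      Nat.choose_succ_right_eq _ _
    have h3 : Nat.choose m (j+1) * (j+1) = Nat.choose m j * (m - j) :=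
      Nat.choose_succ_right_eq _ _
    have e1 : 2*m - 2*j = 2*(p+1) := by omega
    have e2 : 2*m - (2*j+1) = 2*p+1 := by omega
    have e3 : m - j = p + 1 := by omega
    rw [e1] at h1; rw [e2] at h2; rw [e3] at h3
    -- multiply target by (2j+1)(2j+2)
    have key : Nat.choose (2*m) (2*j+2) * ((2*j+2) * (2*j+1)) =
        Nat.choose (2*m) (2*j) * (2*(p+1)) * (2*p+1) := by
      calc Nat.choose (2*m) (2*j+2) * ((2*j+2) * (2*j+1))
          = (Nat.choose (2*m) (2*j+2) * (2*j+2)) * (2*j+1) := by ring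
        _ = (Nat.choose (2*m) (2*j+1) * (2*p+1)) * (2*j+1) := by rw [h2]
        _ = (Nat.choose (2*m) (2*j+1) * (2*j+1)) * (2*p+1) := by ring
        _ = Nat.choose (2*m) (2*j) * (2*(p+1)) * (2*p+1) := by rw [h1]
    have hle : Nat.choose (2*m) (2*j+2) * ((2*j+2) * (2*j+1)) ≤
        (Nat.choose m (j+1) * (2*m-1)^(j+1)) * ((2*j+2) * (2*j+1)) := by
      rw [key]
      have hstep : Nat.choose (2*m) (2*j) * (2*(p+1)) * (2*p+1) ≤
          (Nat.choose m j * (2*m-1)^j) * (2*(p+1)) * ((2*m-1) * (2*j+1)) := by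
        have : (2*p+1) ≤ (2*m-1)*(2*j+1) := by
          have : 2*p+1 ≤ 2*m-1 := by omega
          calc 2*p+1 ≤ 2*m-1 := this
            _ ≤ (2*m-1)*(2*j+1) := Nat.le_mul_of_pos_right _ (by omega)
        exact Nat.mul_le_mul (Nat.mul_le_mul_right _ ihj) this
      refine le_trans hstep (le_of_eq ?_)
      have : Nat.choose m (j+1) * ((2*j+2) * (2*j+1)) = Nat.choose m j * (p+1) * (2*(2*j+1)) := by
        calc Nat.choose m (j+1) * ((2*j+2) * (2*j+1))
            = (Nat.choose m (j+1) * (j+1)) * (2 * (2*j+1)) := by ring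
          _ = (Nat.choose m j * (p+1)) * (2*(2*j+1)) := by rw [h3]
      calc (Nat.choose m j * (2*m-1)^j) * (2*(p+1)) * ((2*m-1) * (2*j+1))
          = (Nat.choose m j * (p+1) * (2*(2*j+1))) * ((2*m-1)^j * (2*m-1)) := by ring
        _ = (Nat.choose m (j+1) * ((2*j+2) * (2*j+1))) * (2*m-1)^(j+1) := by
            rw [this, pow_succ]
        _ = Nat.choose m (j+1) * (2*m-1)^(j+1) * ((2*j+2) * (2*j+1)) := by ring
    exact Nat.le_of_mul_le_mul_right hle (by positivity)

lemma sum_even_reindex (n : ℕ) (f : ℕ → ℝ) (hodd : ∀ k, ¬ Even k → f k = 0) :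
    ∑ k ∈ Finset.range (2*n+1), f k = ∑ j ∈ Finset.range (n+1), f (2*j) := by
  classical
  rw [← Finset.sum_filter_of_ne (p := fun k => Even k)
    (fun x _ hx => by by_contra hev; exact hx (hodd x hev))]
  refine Finset.sum_nbij' (i := fun k => k/2) (j := fun j => 2*j) ?_ ?_ ?_ ?_ ?_
  · intro a ha
    simp only [Finset.mem_filter, Finset.mem_range] at ha ⊢
    omega
  · intro a ha
    simp only [Finset.mem_filter, Finset.mem_range] at ha ⊢
    exact ⟨by omega, even_two_mul a⟩
  · intro a ha
    simp only [Finset.mem_filter, Finset.mem_range] at ha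
    obtain ⟨-, k, hk⟩ := ha
    omega
  · intro a _; omega
  · intro a ha
    simp only [Finset.mem_filter, Finset.mem_range] at ha
    obtain ⟨-, k, hk⟩ := ha
    congr 1
    omega

lemma two_point (m : ℕ) (a b : ℝ) :
    (a+b)^(2*m) + (a-b)^(2*m) ≤ 2 * (a^2 + ((2*m-1:ℕ):ℝ) * b^2)^m := by
  rw [add_pow, sub_eq_add_neg, add_pow, ← Finset.sum_add_distrib, add_pow, Finset.mul_sum]
  set f : ℕ → ℝ := fun k => a^k * b^(2*m-k) * (Nat.choose (2*m) k : ℝ)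
      + a^k * (-b)^(2*m-k) * (Nat.choose (2*m) k : ℝ) with hf
  have hodd : ∀ k, ¬ Even k → f k = 0 := by
    intro k hk
    rcases le_or_gt k (2*m) with h | h
    · have hodd2 : Odd (2*m - k) := by
        rcases Nat.odd_iff.mpr (Nat.not_even_iff.mp hk) with ⟨r, hr⟩
        exact Nat.odd_iff.mpr (by omega)
      simp only [hf, hodd2.neg_pow]
      ring
    · simp only [hf, Nat.choose_eq_zero_of_lt h, Nat.cast_zero, mul_zero, add_zero]
  rw [sum_even_reindex m _ hodd]
  refine Finset.sum_le_sum fun j hj => ?_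
  simp only [Finset.mem_range] at hj
  have hjm : j ≤ m := by omega
  have heven : Even (2*m - 2*j) := by
    refine Nat.even_sub (by omega) |>.mpr (by simp)
  have e1 : (-b)^(2*m-2*j) = b^(2*m-2*j) := heven.neg_pow b
  have e2 : (2:ℕ)*m - 2*j = 2*(m-j) := by omega
  have e3 : a^(2*j) = (a^2)^j := by rw [← pow_mul, mul_comm]
  have e4 : b^(2*(m-j)) = (b^2)^(m-j) := by rw [← pow_mul, mul_comm]
  have hbin : (Nat.choose (2*m) (2*j) : ℝ) ≤ (Nat.choose m j : ℝ) * ((2*m-1:ℕ):ℝ)^(m-j) := by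
    have h1 : Nat.choose (2*m) (2*j) = Nat.choose (2*m) (2*(m-j)) := by
      rw [show (2:ℕ)*(m-j) = 2*m - 2*j by omega]
      exact (Nat.choose_symm (by omega : 2*j ≤ 2*m)).symm
    have h2 := binom_aux m (m-j) (by omega)
    have h3 : Nat.choose m (m-j) = Nat.choose m j := Nat.choose_symm hjm
    rw [h3] at h2
    calc (Nat.choose (2*m) (2*j) : ℝ) = (Nat.choose (2*m) (2*(m-j)) : ℝ) := by rw [h1]
      _ ≤ ((Nat.choose m j * (2*m-1)^(m-j) : ℕ) : ℝ) := by exact_mod_cast h2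
      _ = (Nat.choose m j : ℝ) * ((2*m-1:ℕ):ℝ)^(m-j) := by push_cast; ring
  have e0 : f (2*j) = a^(2*j) * b^(2*m-2*j) * (Nat.choose (2*m) (2*j) : ℝ)
      + a^(2*j) * (-b)^(2*m-2*j) * (Nat.choose (2*m) (2*j) : ℝ) := rfl
  calc f (2*j) = 2 * ((a^2)^j * (b^2)^(m-j)) * (Nat.choose (2*m) (2*j) : ℝ) := by
        rw [e0, e1, e2, e3, e4]; ring
    _ ≤ 2 * ((a^2)^j * (b^2)^(m-j)) * ((Nat.choose m j : ℝ) * ((2*m-1:ℕ):ℝ)^(m-j)) := by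
        have : (0:ℝ) ≤ 2 * ((a^2)^j * (b^2)^(m-j)) := by positivity
        exact mul_le_mul_of_nonneg_left hbin this
    _ = 2 * ((a^2)^j * (((2*m-1:ℕ):ℝ) * b^2)^(m-j) * (Nat.choose m j : ℝ)) := by
        rw [mul_pow]; ring


/-- Minkowski consequence: if `∑ u^m ≤ K·α^m` and `∑ w^m ≤ K·γ^m` then
`∑ (u+w)^m ≤ K·(α+γ)^m`, for nonneg data and `1 ≤ m`. -/
lemma mink {ι : Type*} [Fintype ι] (m : ℕ) (hm : 1 ≤ m) (u w : ι → ℝ)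
    (hu : ∀ i, 0 ≤ u i) (hw : ∀ i, 0 ≤ w i) (K α γ : ℝ) (hK : 0 < K)
    (hα : 0 ≤ α) (hγ : 0 ≤ γ)
    (h1 : ∑ i, u i ^ m ≤ K * α ^ m) (h2 : ∑ i, w i ^ m ≤ K * γ ^ m) :
    ∑ i, (u i + w i) ^ m ≤ K * (α + γ) ^ m := by
  have hm0 : (m : ℝ) ≠ 0 := by positivity
  have hp : (1 : ℝ) ≤ (m : ℝ) := by exact_mod_cast hm
  -- rewrite pow as rpow
  have key := Real.Lp_add_le_of_nonneg (s := (univ : Finset ι)) (f := u) (g := w) (p := (m : ℝ)) hp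
    (fun i _ => hu i) (fun i _ => hw i)
  have hrw : ∀ f : ι → ℝ, (∀ i, 0 ≤ f i) → (∑ i, f i ^ (m : ℝ)) = ∑ i, f i ^ m := by
    intro f hf
    refine Finset.sum_congr rfl fun i _ => ?_
    rw [Real.rpow_natCast]
  rw [hrw _ hu, hrw _ hw, hrw _ (fun i => add_nonneg (hu i) (hw i))] at key
  set S := ∑ i, (u i + w i) ^ m with hS
  have hSnn : 0 ≤ S := Finset.sum_nonneg fun i _ => pow_nonneg (add_nonneg (hu i) (hw i)) m
  have hKm : 0 < K ^ ((1:ℝ)/m) := Real.rpow_pos_of_pos hK _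
  have hbound : S ^ ((1:ℝ)/m) ≤ K ^ ((1:ℝ)/m) * (α + γ) := by
    calc S ^ ((1:ℝ)/m) ≤ (∑ i, u i ^ m) ^ ((1:ℝ)/m) + (∑ i, w i ^ m) ^ ((1:ℝ)/m) := key
    _ ≤ (K * α ^ m) ^ ((1:ℝ)/m) + (K * γ ^ m) ^ ((1:ℝ)/m) := by
        gcongr
        · exact Finset.sum_nonneg fun i _ => pow_nonneg (hu i) m
        · exact Finset.sum_nonneg fun i _ => pow_nonneg (hw i) m
    _ = K ^ ((1:ℝ)/m) * (α + γ) := by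
        rw [Real.mul_rpow hK.le (by positivity), Real.mul_rpow hK.le (by positivity)]
        rw [← Real.rpow_natCast α m, ← Real.rpow_natCast γ m,
          ← Real.rpow_mul hα, ← Real.rpow_mul hγ]
        rw [mul_one_div_cancel hm0, Real.rpow_one, Real.rpow_one]
        ring
  have := Real.rpow_le_rpow (Real.rpow_nonneg hSnn _) hbound (by positivity : (0:ℝ) ≤ (m:ℝ))
  rw [← Real.rpow_mul hSnn, one_div_mul_cancel hm0, Real.rpow_one,
    Real.rpow_natCast] at this
  calc S ≤ (K ^ ((1:ℝ)/m) * (α + γ)) ^ (m:ℕ) := this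
  _ = K * (α + γ) ^ m := by
      rw [mul_pow, ← Real.rpow_natCast (K ^ ((1:ℝ)/m)) m, ← Real.rpow_mul hK.le,
        one_div_mul_cancel hm0, Real.rpow_one]

lemma sum_bool_split (n : ℕ) (g : (Fin (n+1) → Bool) → ℝ) :
    ∑ s : Fin (n+1) → Bool, g s
      = ∑ x : Fin n → Bool, g (Fin.cons true x) + ∑ x : Fin n → Bool, g (Fin.cons false x) := by
  rw [← Equiv.sum_comp (Fin.consEquiv fun _ : Fin (n+1) => Bool) g, Fintype.sum_prod_type,
    Fintype.sum_bool]
  rfl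

lemma signedVec_cons_succ {n : ℕ} (ε : Bool) (x : Fin n → Bool) (j : Fin n) :
    signedVec (Fin.cons ε x) j.succ = signedVec x j := by
  simp [signedVec, Fin.cons_succ]

lemma signedVec_cons_zero {n : ℕ} (ε : Bool) (x : Fin n → Bool) :
    signedVec (Fin.cons ε x) 0 = if ε then (1:ℝ)/2 else -(1/2) := by
  simp [signedVec]

lemma lin_moment (m : ℕ) (hm : 1 ≤ m) :
    ∀ (n : ℕ) (c : ℝ) (b : Fin n → ℝ),
    ∑ s : Fin n → Bool, (c + ∑ j, b j * signedVec s j)^(2*m)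
      ≤ 2^n * (((2*m-1:ℕ):ℝ) * (c^2 + (∑ j, (b j)^2) / 4))^m := by
  intro n
  have hc2m : (1:ℝ) ≤ ((2*m-1:ℕ):ℝ) := by
    have : 1 ≤ 2*m-1 := by omega
    exact_mod_cast this
  induction n with
  | zero =>
    intro c b
    have h0 : ∑ s : Fin 0 → Bool, (c + ∑ j, b j * signedVec s j)^(2*m) = (c^2)^m := by
      rw [Fintype.sum_unique]
      simp [← pow_mul, mul_comm]
    rw [h0]
    have hsum0 : (∑ j : Fin 0, (b j)^2) = 0 := by simp
    rw [hsum0]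
    have hbase : c^2 ≤ ((2*m-1:ℕ):ℝ) * (c^2 + 0/4) := by nlinarith [sq_nonneg c]
    calc (c^2)^m ≤ (((2*m-1:ℕ):ℝ) * (c^2 + 0/4))^m := pow_le_pow_left₀ (sq_nonneg c) hbase m
      _ = 2^0 * (((2*m-1:ℕ):ℝ) * (c^2 + 0/4))^m := by ring
  | succ n ih =>
    intro c b
    set c2m : ℝ := ((2*m-1:ℕ):ℝ) with hc2
    set G : (Fin n → Bool) → ℝ := fun x => c + ∑ j, b j.succ * signedVec x j with hG
    have hsplit : ∀ (ε : Bool) (x : Fin n → Bool),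
        c + ∑ j, b j * signedVec (Fin.cons ε x) j
          = G x + (if ε then (1:ℝ)/2 else -(1/2)) * b 0 := by
      intro ε x
      rw [Fin.sum_univ_succ]
      simp only [signedVec_cons_zero, signedVec_cons_succ, hG]
      ring
    rw [sum_bool_split]
    have e1 : ∀ x : Fin n → Bool,
        (c + ∑ j, b j * signedVec (Fin.cons true x) j)^(2*m) = (G x + b 0 / 2)^(2*m) := by
      intro x; rw [hsplit]; simp only [if_true]; ring
    have e2 : ∀ x : Fin n → Bool,
        (c + ∑ j, b j * signedVec (Fin.cons false x) j)^(2*m) = (G x - b 0 / 2)^(2*m) := by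
      intro x; rw [hsplit]; simp only [Bool.false_eq_true, if_false]; ring
    simp only [e1, e2]
    rw [← Finset.sum_add_distrib]
    have step1 : ∑ x : Fin n → Bool, ((G x + b 0 / 2)^(2*m) + (G x - b 0 / 2)^(2*m))
        ≤ ∑ x : Fin n → Bool, 2 * ((G x)^2 + c2m * (b 0 / 2)^2)^m :=
      Finset.sum_le_sum fun x _ => two_point m (G x) (b 0 / 2)
    refine le_trans step1 ?_
    rw [← Finset.mul_sum]
    have step2 : ∑ x : Fin n → Bool, ((G x)^2 + c2m * (b 0 / 2)^2)^m
        ≤ 2^n * ((c2m * (c^2 + (∑ j : Fin n, (b j.succ)^2) / 4)) + c2m * (b 0 / 2)^2)^m := by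
      refine mink m hm (fun x => (G x)^2) (fun _ => c2m * (b 0 / 2)^2)
        (fun x => sq_nonneg _) (fun _ => by positivity) (2^n) _ _ (by positivity)
        (by positivity) (by positivity) ?_ ?_
      · have := ih c (fun j => b j.succ)
        calc ∑ x : Fin n → Bool, ((G x)^2)^m = ∑ x : Fin n → Bool, (G x)^(2*m) := by
              refine Finset.sum_congr rfl fun x _ => ?_
              rw [← pow_mul, mul_comm]
        _ ≤ 2^n * (c2m * (c^2 + (∑ j : Fin n, (b j.succ)^2) / 4))^m := this
      · rw [Finset.sum_const, Finset.card_univ, Fintype.card_fun, Fintype.card_bool,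
          Fintype.card_fin, nsmul_eq_mul]
        norm_num
    calc 2 * ∑ x : Fin n → Bool, ((G x)^2 + c2m * (b 0 / 2)^2)^m
        ≤ 2 * (2^n * ((c2m * (c^2 + (∑ j : Fin n, (b j.succ)^2) / 4)) + c2m * (b 0 / 2)^2)^m) := by
          linarith [step2]
      _ = 2^(n+1) * (c2m * (c^2 + (∑ j : Fin (n+1), (b j)^2) / 4))^m := by
          rw [Fin.sum_univ_succ]
          ring_nf

lemma quad_moment (m : ℕ) (hm : 1 ≤ m) :
    ∀ (n : ℕ) (c : ℝ) (b : Fin n → ℝ) (a : Fin n → Fin n → ℝ), (∀ j, a j j = 0) →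
    ∑ s : Fin n → Bool,
      (c + ∑ j, b j * signedVec s j + ∑ j, ∑ k, a j k * signedVec s j * signedVec s k)^(2*m)
      ≤ 2^n * ((((2*m-1:ℕ):ℝ))^2
          * (c^2 + (∑ j, (b j)^2)/4 + (∑ j, ∑ k, (a j k)^2)/8))^m := by
  intro n
  have hc2m : (1:ℝ) ≤ ((2*m-1:ℕ):ℝ) := by
    have : 1 ≤ 2*m-1 := by omega
    exact_mod_cast this
  induction n with
  | zero =>
    intro c b a _
    have h0 : ∑ s : Fin 0 → Bool,
        (c + ∑ j, b j * signedVec s j + ∑ j, ∑ k, a j k * signedVec s j * signedVec s k)^(2*m)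
        = (c^2)^m := by
      rw [Fintype.sum_unique]
      simp [← pow_mul, mul_comm]
    rw [h0]
    have hsum0 : (∑ j : Fin 0, (b j)^2) = 0 := by simp
    have hsum0' : (∑ j : Fin 0, ∑ k : Fin 0, (a j k)^2) = 0 := by simp
    rw [hsum0, hsum0']
    have h1 : (1:ℝ) ≤ (((2*m-1:ℕ):ℝ))^2 := by nlinarith [hc2m]
    have hbase : c^2 ≤ (((2*m-1:ℕ):ℝ))^2 * (c^2 + 0/4 + 0/8) := by nlinarith [sq_nonneg c, h1]
    calc (c^2)^m ≤ ((((2*m-1:ℕ):ℝ))^2 * (c^2 + 0/4 + 0/8))^m :=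
          pow_le_pow_left₀ (sq_nonneg c) hbase m
      _ = 2^0 * ((((2*m-1:ℕ):ℝ))^2 * (c^2 + 0/4 + 0/8))^m := by ring
  | succ n ih =>
    intro c b a ha
    set c2m : ℝ := ((2*m-1:ℕ):ℝ) with hc2
    have hc2m0 : 0 ≤ c2m := le_trans zero_le_one hc2m
    set G : (Fin n → Bool) → ℝ := fun x => c + ∑ j : Fin n, b j.succ * signedVec x j
      + ∑ j : Fin n, ∑ k : Fin n, a j.succ k.succ * signedVec x j * signedVec x k with hG
    set H : (Fin n → Bool) → ℝ := fun x =>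
      b 0 + ∑ j : Fin n, (a 0 j.succ + a j.succ 0) * signedVec x j with hH
    have hsplit : ∀ (ε : Bool) (x : Fin n → Bool),
        c + ∑ j, b j * signedVec (Fin.cons ε x) j
          + ∑ j, ∑ k, a j k * signedVec (Fin.cons ε x) j * signedVec (Fin.cons ε x) k
          = G x + (if ε then (1:ℝ)/2 else -(1/2)) * H x := by
      intro ε x
      set e : ℝ := if ε then (1:ℝ)/2 else -(1/2) with he
      have hb : ∑ j, b j * signedVec (Fin.cons ε x) j
          = b 0 * e + ∑ j : Fin n, b j.succ * signedVec x j := by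
        rw [Fin.sum_univ_succ]
        simp only [signedVec_cons_zero, signedVec_cons_succ, ← he]
      have hq : ∑ j, ∑ k, a j k * signedVec (Fin.cons ε x) j * signedVec (Fin.cons ε x) k
          = e * (∑ j : Fin n, (a 0 j.succ + a j.succ 0) * signedVec x j)
            + ∑ j : Fin n, ∑ k : Fin n, a j.succ k.succ * signedVec x j * signedVec x k := by
        rw [Fin.sum_univ_succ]
        have hinner0 : ∑ k, a 0 k * signedVec (Fin.cons ε x) 0 * signedVec (Fin.cons ε x) k
            = e * ∑ k : Fin n, a 0 k.succ * signedVec x k := by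
          rw [Fin.sum_univ_succ]
          simp only [signedVec_cons_zero, signedVec_cons_succ, ← he, ha 0]
          rw [Finset.mul_sum]
          have : (0:ℝ) * e * e = 0 := by ring
          rw [this, zero_add]
          exact Finset.sum_congr rfl fun k _ => by ring
        have hinnerj : ∀ j : Fin n,
            ∑ k, a j.succ k * signedVec (Fin.cons ε x) j.succ * signedVec (Fin.cons ε x) k
            = a j.succ 0 * signedVec x j * e
              + ∑ k : Fin n, a j.succ k.succ * signedVec x j * signedVec x k := by
          intro j
          rw [Fin.sum_univ_succ]
          simp only [signedVec_cons_zero, signedVec_cons_succ, ← he]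
        rw [hinner0]
        rw [Finset.sum_congr rfl fun j _ => hinnerj j, Finset.sum_add_distrib]
        have : ∑ j : Fin n, a j.succ 0 * signedVec x j * e
            = e * ∑ j : Fin n, a j.succ 0 * signedVec x j := by
          rw [Finset.mul_sum]
          exact Finset.sum_congr rfl fun j _ => by ring
        rw [this]
        have hsum : ∑ j : Fin n, (a 0 j.succ + a j.succ 0) * signedVec x j
            = (∑ j : Fin n, a 0 j.succ * signedVec x j)
              + ∑ j : Fin n, a j.succ 0 * signedVec x j := by
          rw [← Finset.sum_add_distrib]
          exact Finset.sum_congr rfl fun j _ => by ring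
        rw [hsum]
        ring
      rw [hb, hq, hG, hH]
      ring
    rw [sum_bool_split]
    have e1 : ∀ x : Fin n → Bool,
        (c + ∑ j, b j * signedVec (Fin.cons true x) j
          + ∑ j, ∑ k, a j k * signedVec (Fin.cons true x) j * signedVec (Fin.cons true x) k)^(2*m)
          = (G x + H x / 2)^(2*m) := by
      intro x; rw [hsplit]; simp only [if_true]; ring
    have e2 : ∀ x : Fin n → Bool,
        (c + ∑ j, b j * signedVec (Fin.cons false x) j
          + ∑ j, ∑ k, a j k * signedVec (Fin.cons false x) j * signedVec (Fin.cons false x) k)^(2*m)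
          = (G x - H x / 2)^(2*m) := by
      intro x; rw [hsplit]; simp only [Bool.false_eq_true, if_false]; ring
    simp only [e1, e2]
    rw [← Finset.sum_add_distrib]
    have step1 : ∑ x : Fin n → Bool, ((G x + H x / 2)^(2*m) + (G x - H x / 2)^(2*m))
        ≤ ∑ x : Fin n → Bool, 2 * ((G x)^2 + c2m * (H x / 2)^2)^m :=
      Finset.sum_le_sum fun x _ => two_point m (G x) (H x / 2)
    refine le_trans step1 ?_
    rw [← Finset.mul_sum]
    set VG : ℝ := c^2 + (∑ j : Fin n, (b j.succ)^2)/4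
      + (∑ j : Fin n, ∑ k : Fin n, (a j.succ k.succ)^2)/8 with hVG
    set VH : ℝ := (b 0)^2 + (∑ j : Fin n, (a 0 j.succ + a j.succ 0)^2)/4 with hVH
    have hVGnn : 0 ≤ VG := by
      have : 0 ≤ ∑ j : Fin n, (b j.succ)^2 := Finset.sum_nonneg fun j _ => sq_nonneg _
      have : 0 ≤ ∑ j : Fin n, ∑ k : Fin n, (a j.succ k.succ)^2 :=
        Finset.sum_nonneg fun j _ => Finset.sum_nonneg fun k _ => sq_nonneg _
      positivity
    have hVHnn : 0 ≤ VH := by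
      have : 0 ≤ ∑ j : Fin n, (a 0 j.succ + a j.succ 0)^2 :=
        Finset.sum_nonneg fun j _ => sq_nonneg _
      positivity
    have step2 : ∑ x : Fin n → Bool, ((G x)^2 + c2m * (H x / 2)^2)^m
        ≤ 2^n * (c2m^2 * VG + c2m^2 * VH / 4)^m := by
      refine mink m hm (fun x => (G x)^2) (fun x => c2m * (H x / 2)^2)
        (fun x => sq_nonneg _) (fun x => by positivity) (2^n) _ _ (by positivity)
        (by positivity) (by positivity) ?_ ?_
      · have := ih c (fun j => b j.succ) (fun j k => a j.succ k.succ) (fun j => ha j.succ)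
        calc ∑ x : Fin n → Bool, ((G x)^2)^m = ∑ x : Fin n → Bool, (G x)^(2*m) := by
              refine Finset.sum_congr rfl fun x _ => ?_
              rw [← pow_mul, mul_comm]
        _ ≤ 2^n * (c2m^2 * VG)^m := this
      · have hlin := lin_moment m hm n (b 0) (fun j => (a 0 j.succ + a j.succ 0))
        calc ∑ x : Fin n → Bool, (c2m * (H x / 2)^2)^m
            = (c2m/4)^m * ∑ x : Fin n → Bool, (H x)^(2*m) := by
              rw [Finset.mul_sum]
              refine Finset.sum_congr rfl fun x _ => ?_
              have hb : c2m * (H x / 2)^2 = c2m/4 * (H x)^2 := by ring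
              rw [hb, mul_pow, ← pow_mul]
          _ ≤ (c2m/4)^m * (2^n * (c2m * VH)^m) := by
              refine mul_le_mul_of_nonneg_left ?_ (by positivity)
              exact hlin
          _ = 2^n * (c2m^2 * VH / 4)^m := by
              rw [← mul_assoc, mul_comm ((c2m/4)^m) ((2:ℝ)^n), mul_assoc, ← mul_pow]
              congr 2
              ring
    calc 2 * ∑ x : Fin n → Bool, ((G x)^2 + c2m * (H x / 2)^2)^m
        ≤ 2 * (2^n * (c2m^2 * VG + c2m^2 * VH / 4)^m) := by linarith [step2]
      _ = 2^(n+1) * (c2m^2 * (VG + VH / 4))^m := by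
          have hb : c2m^2 * VG + c2m^2 * VH / 4 = c2m^2 * (VG + VH / 4) := by ring
          rw [hb, pow_succ]
          ring
      _ ≤ 2^(n+1) * (c2m^2 * (c^2 + (∑ j, (b j)^2)/4 + (∑ j, ∑ k, (a j k)^2)/8))^m := by
          have hkey : ∑ j : Fin n, (a 0 j.succ + a j.succ 0)^2
              ≤ ∑ j : Fin n, (2*(a 0 j.succ)^2 + 2*(a j.succ 0)^2) := by
            refine Finset.sum_le_sum fun j _ => ?_
            nlinarith [sq_nonneg (a 0 j.succ - a j.succ 0)]
          have splitb : ∑ j, (b j)^2 = (b 0)^2 + ∑ j : Fin n, (b j.succ)^2 :=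
            Fin.sum_univ_succ _
          have splita : ∑ j, ∑ k, (a j k)^2
              = ((a 0 0)^2 + ∑ k : Fin n, (a 0 k.succ)^2)
                + (∑ j : Fin n, (a j.succ 0)^2
                  + ∑ j : Fin n, ∑ k : Fin n, (a j.succ k.succ)^2) := by
            rw [Fin.sum_univ_succ]
            congr 1
            · exact Fin.sum_univ_succ _
            · rw [← Finset.sum_add_distrib]
              exact Finset.sum_congr rfl fun j _ => Fin.sum_univ_succ _
          have hsplit2 : ∑ j : Fin n, (2*(a 0 j.succ)^2 + 2*(a j.succ 0)^2)
              = 2 * (∑ k : Fin n, (a 0 k.succ)^2) + 2 * (∑ j : Fin n, (a j.succ 0)^2) := by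
            rw [Finset.sum_add_distrib, Finset.mul_sum, Finset.mul_sum]
          have hVle : VG + VH / 4
              ≤ c^2 + (∑ j, (b j)^2)/4 + (∑ j, ∑ k, (a j k)^2)/8 := by
            rw [hVG, hVH, splitb, splita, ha 0]
            rw [hsplit2] at hkey
            nlinarith [hkey]
          have h1 : c2m^2 * (VG + VH/4)
              ≤ c2m^2 * (c^2 + (∑ j, (b j)^2)/4 + (∑ j, ∑ k, (a j k)^2)/8) :=
            mul_le_mul_of_nonneg_left hVle (by positivity)
          have h2 : (0:ℝ) ≤ c2m^2 * (VG + VH/4) := by positivity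
          have := pow_le_pow_left₀ h2 h1 m
          have h3 : (0:ℝ) < 2^(n+1) := by positivity
          nlinarith [this, h3, pow_nonneg h2 m]

end Aux

/-- There exist `β > 0` and an integer `D₀` such that for every
`D ≥ D₀`, every positive `N`, every degree-`D` MAX-3-LIN-2 instance `J`, and every
index `i`, the probability that `|F_i(v)| ≥ (1/2)·D^(3/4)` is at most
`exp(−β·D^(1/4))`.  The probability is the fraction of the `2^N` sign patterns for
which the event holds. -/
theorem stmt10 : ∃ β : ℝ, β > 0 ∧ ∃ D₀ : ℕ, ∀ D : ℕ, D₀ ≤ D → ∀ N : ℕ, 0 < N →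
    ∀ J : Fin N → Fin N → Fin N → ℝ, IsMax3Lin2 N D J → ∀ i : Fin N,
    ((Finset.univ.filter fun s : Fin N → Bool =>
        (1 / 2) * (D : ℝ) ^ ((3 : ℝ) / 4) ≤ |force J (signedVec s) i|).card : ℝ) / 2 ^ N
      ≤ Real.exp (-β * (D : ℝ) ^ ((1 : ℝ) / 4)) := by
  refine ⟨1/4, by norm_num, 256, fun D hD N hN J hJ i => ?_⟩
  obtain ⟨hJ1, hJ2, hJ3, hJ4, hJ5⟩ := hJ
  have hDR : (256:ℝ) ≤ (D:ℝ) := by exact_mod_cast hD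
  have hD0 : (0:ℝ) < (D:ℝ) := by linarith
  set d4 : ℝ := (D:ℝ) ^ ((1:ℝ)/4) with hd4def
  have hd4pos : 0 < d4 := Real.rpow_pos_of_pos hD0 _
  have h256 : ((256:ℝ)) ^ ((1:ℝ)/4) = 4 := by
    have : (256:ℝ) = (4:ℝ)^(4:ℕ) := by norm_num
    rw [this, ← Real.rpow_natCast (4:ℝ) 4, ← Real.rpow_mul (by norm_num : (0:ℝ) ≤ 4)]
    norm_num
  have hd4ge4 : (4:ℝ) ≤ d4 := by
    rw [← h256, hd4def]
    exact Real.rpow_le_rpow (by norm_num) hDR (by norm_num)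
  set m : ℕ := ⌊d4/2⌋₊ with hmdef
  have hm1 : 1 ≤ m := by
    rw [hmdef]
    exact Nat.le_floor (by push_cast; linarith)
  have hmub : (m:ℝ) ≤ d4/2 := Nat.floor_le (by linarith)
  have hmlb : d4/4 ≤ (m:ℝ) := by
    have := Nat.lt_floor_add_one (d4/2)
    rw [← hmdef] at this
    linarith
  set c2m : ℝ := ((2*m-1:ℕ):ℝ) with hc2mdef
  have hc2m_le : c2m ≤ d4 := by
    have h1 : ((2*m-1:ℕ):ℝ) ≤ ((2*m:ℕ):ℝ) := by exact_mod_cast Nat.sub_le (2*m) 1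
    have h2 : ((2*m:ℕ):ℝ) = 2*(m:ℝ) := by push_cast; ring
    rw [hc2mdef]
    linarith
  have hc2m0 : 0 ≤ c2m := Nat.cast_nonneg _
  -- moment bound
  have heq : ∀ s : Fin N → Bool,
      force J (signedVec s) i
        = 0 + ∑ j, (fun _ : Fin N => (0:ℝ)) j * signedVec s j
          + ∑ j, ∑ k, (fun j k => J i j k / 2) j k * signedVec s j * signedVec s k := by
    intro s
    simp only [zero_mul, Finset.sum_const_zero, add_zero, zero_add]
    rw [force, Finset.mul_sum]
    refine Finset.sum_congr rfl fun j _ => ?_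
    rw [Finset.mul_sum]
    exact Finset.sum_congr rfl fun k _ => by ring
  have hdiag : ∀ j : Fin N, (fun j k => J i j k / 2) j j = 0 := by
    intro j
    simp [hJ4 i j j (Or.inr (Or.inr rfl))]
  have hmom0 := quad_moment m hm1 N 0 (fun _ => 0) (fun j k => J i j k / 2) hdiag
  have hconst : ((0:ℝ)^2 + (∑ j : Fin N, ((fun _ : Fin N => (0:ℝ)) j)^2)/4
      + (∑ j : Fin N, ∑ k : Fin N, ((fun j k => J i j k / 2) j k)^2)/8) = (D:ℝ)/16 := by
    have hq : ∑ j : Fin N, ∑ k : Fin N, (J i j k / 2)^2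
        = (∑ j : Fin N, ∑ k : Fin N, (J i j k)^2)/4 := by
      rw [Finset.sum_div]
      refine Finset.sum_congr rfl fun j _ => ?_
      rw [Finset.sum_div]
      exact Finset.sum_congr rfl fun k _ => by ring
    simp only
    rw [hq, hJ5 i]
    norm_num
    ring
  rw [hconst] at hmom0
  have hmom : ∑ s : Fin N → Bool, (force J (signedVec s) i)^(2*m)
      ≤ 2^N * (c2m^2 * ((D:ℝ)/16))^m := by
    calc ∑ s : Fin N → Bool, (force J (signedVec s) i)^(2*m)
        = ∑ s : Fin N → Bool, (0 + ∑ j, (fun _ : Fin N => (0:ℝ)) j * signedVec s j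
          + ∑ j, ∑ k, (fun j k => J i j k / 2) j k * signedVec s j * signedVec s k)^(2*m) :=
          Finset.sum_congr rfl fun s _ => by rw [← heq s]
      _ ≤ 2^N * (c2m^2 * ((D:ℝ)/16))^m := hmom0
  -- Markov
  set T : ℝ := (1/2) * (D:ℝ) ^ ((3:ℝ)/4) with hTdef
  have hTpos : 0 < T := by
    have := Real.rpow_pos_of_pos hD0 ((3:ℝ)/4)
    rw [hTdef]; linarith
  set Ev : Finset (Fin N → Bool) :=
    Finset.univ.filter fun s : Fin N → Bool => T ≤ |force J (signedVec s) i| with hEv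
  have hcardT : (Ev.card : ℝ) * T^(2*m) ≤ ∑ s : Fin N → Bool, (force J (signedVec s) i)^(2*m) := by
    have h1 : (Ev.card : ℝ) * T^(2*m) = ∑ _s ∈ Ev, T^(2*m) := by
      rw [Finset.sum_const, nsmul_eq_mul]
    rw [h1]
    have hnn : ∀ s : Fin N → Bool, 0 ≤ (force J (signedVec s) i)^(2*m) := by
      intro s
      have : (force J (signedVec s) i)^(2*m) = ((force J (signedVec s) i)^2)^m := by
        rw [← pow_mul, mul_comm]
      rw [this]
      positivity
    calc ∑ _s ∈ Ev, T^(2*m) ≤ ∑ s ∈ Ev, (force J (signedVec s) i)^(2*m) := by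
          refine Finset.sum_le_sum fun s hs => ?_
          rw [hEv, Finset.mem_filter] at hs
          have habs : T ≤ |force J (signedVec s) i| := hs.2
          calc T^(2*m) ≤ |force J (signedVec s) i|^(2*m) :=
                pow_le_pow_left₀ hTpos.le habs (2*m)
            _ = (force J (signedVec s) i)^(2*m) := by
                rw [← abs_pow]
                exact abs_of_nonneg (hnn s)
      _ ≤ ∑ s : Fin N → Bool, (force J (signedVec s) i)^(2*m) :=
          Finset.sum_le_sum_of_subset_of_nonneg (Finset.subset_univ _) (fun s _ _ => hnn s)
  -- key constant comparison : c2m^2 * (D/16) ≤ (1/4) * T^2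
  have hd4sq : d4^2 * (D:ℝ) = ((D:ℝ) ^ ((3:ℝ)/4))^2 := by
    rw [hd4def, ← Real.rpow_natCast ((D:ℝ) ^ ((1:ℝ)/4)) 2, ← Real.rpow_natCast ((D:ℝ) ^ ((3:ℝ)/4)) 2,
      ← Real.rpow_mul hD0.le, ← Real.rpow_mul hD0.le]
    nth_rewrite 2 [show (D:ℝ) = (D:ℝ)^(1:ℝ) by rw [Real.rpow_one]]
    rw [← Real.rpow_add hD0]
    norm_num
  have hkey : c2m^2 * ((D:ℝ)/16) ≤ (1/4) * T^2 := by
    have h1 : c2m^2 ≤ d4^2 := by nlinarith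
    have h2 : (1/4) * T^2 = d4^2 * (D:ℝ) / 16 := by
      rw [hTdef, mul_pow, hd4sq]
      ring
    rw [h2]
    have := mul_le_mul_of_nonneg_right h1 (by positivity : (0:ℝ) ≤ (D:ℝ)/16)
    calc c2m^2 * ((D:ℝ)/16) ≤ d4^2 * ((D:ℝ)/16) := this
      _ = d4^2 * (D:ℝ)/16 := by ring
  have hcard2 : (Ev.card : ℝ) * T^(2*m) ≤ 2^N * ((1/4)^m * T^(2*m)) := by
    calc (Ev.card : ℝ) * T^(2*m) ≤ 2^N * (c2m^2 * ((D:ℝ)/16))^m := le_trans hcardT hmom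
      _ ≤ 2^N * ((1/4) * T^2)^m := by
          refine mul_le_mul_of_nonneg_left (pow_le_pow_left₀ (by positivity) hkey m) (by positivity)
      _ = 2^N * ((1/4)^m * T^(2*m)) := by
          rw [mul_pow, ← pow_mul, mul_comm 2 m]
  have hcard3 : (Ev.card : ℝ) ≤ 2^N * (1/4)^m := by
    have hTp : (0:ℝ) < T^(2*m) := pow_pos hTpos _
    have := (mul_le_mul_iff_of_pos_right hTp).mp (by
      calc (Ev.card : ℝ) * T^(2*m) ≤ 2^N * ((1/4)^m * T^(2*m)) := hcard2
        _ = (2^N * (1/4)^m) * T^(2*m) := by ring)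
    exact this
  -- final
  have hfinal : (Ev.card : ℝ) / 2^N ≤ (1/4:ℝ)^m := by
    rw [div_le_iff₀ (by positivity : (0:ℝ) < (2:ℝ)^N)]
    linarith [hcard3]
  refine le_trans hfinal ?_
  have hexp1 : (1/4:ℝ) ≤ Real.exp (-1) := by
    have h4 : Real.exp 1 ≤ 4 := by
      have := Real.exp_one_lt_d9
      linarith
    have := one_div_le_one_div_of_le (Real.exp_pos 1) h4
    rw [Real.exp_neg, ← one_div]
    linarith
  calc (1/4:ℝ)^m ≤ (Real.exp (-1))^m := pow_le_pow_left₀ (by norm_num) hexp1 m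
    _ = Real.exp ((m:ℝ) * (-1)) := (Real.exp_nat_mul _ m).symm
    _ ≤ Real.exp (-(1/4) * d4) := by
        rw [Real.exp_le_exp]
        linarith [hmlb]
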